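/- Let T be a symmetric system, 𝒯 its terminal reflection group, T^{ab} the set of 𝒯-orbits in T with the trivial multiplication. Then the initial T^{ab}-reflection group is isomorphic to the direct sum of copies of ℤ/2 indexed by T^{ab}, and in particular is a proper reflection group. -/

import Mathlib

/-- A symmetric system: a set with a multiplication satisfying (S1) and (S2). -/
structure SymmetricSystem (T : Type*) where
  mul : T → T → T
  s1 : ∀ s t : T, mul s (mul s t) = t
  s2 : ∀ r s t : T, mul r (mul s t) = mul (mul r s) (mul r t)

/-- A `T`-reflection group: a group `X` acting on `T` together with a map `t ↦ t^X`
satisfying axioms (G1)-(G4). -/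
structure ReflectionGroup {T : Type*} (S : SymmetricSystem T) (X : Type*) [Group X] where
  act : X → T → T
  act_one : ∀ t : T, act 1 t = t
  act_mul : ∀ x y : X, ∀ t : T, act (x * y) t = act x (act y t)
  refl : T → X
  g1 : Subgroup.closure (Set.range refl) = ⊤
  g2 : ∀ s t : T, act (refl t) s = S.mul t s
  g3 : ∀ s t : T, refl t * refl s * (refl t)⁻¹ = refl (S.mul t s)
  g4 : ∀ t : T, refl t * refl t = 1

/-- For `s ∈ T`, the map `t ↦ s.t` is a bijection of `T` (by (S1)). -/
def SymmetricSystem.perm {T : Type*} (S : SymmetricSystem T) (s : T) : Equiv.Perm T :=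
  Function.Involutive.toPerm (S.mul s) (fun t => S.s1 s t)

/-- The terminal reflection group: the subgroup of the symmetric group of `T` generated by
the maps `t ↦ s.t`. -/
def SymmetricSystem.terminal {T : Type*} (S : SymmetricSystem T) : Subgroup (Equiv.Perm T) :=
  Subgroup.closure (Set.range S.perm)



/-- The relations of the presentation by conjugation. -/
def conjRels {T : Type*} (S : SymmetricSystem T) : Set (FreeGroup T) :=
  {w | (∃ t : T, w = FreeGroup.of t * FreeGroup.of t) ∨
       (∃ s t : T, w = FreeGroup.of t * FreeGroup.of s * (FreeGroup.of t)⁻¹ *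
          (FreeGroup.of (S.mul t s))⁻¹)}

/-- The trivial multiplication on a set. -/
def trivialSystem (A : Type*) : SymmetricSystem A where
  mul := fun _ t => t
  s1 := fun _ _ => rfl
  s2 := fun _ _ _ => rfl

/-- The orbit space `T^ab` of the action of the terminal reflection group on `T`. -/
def SymmetricSystem.orbitSpace {T : Type*} (S : SymmetricSystem T) : Type _ :=
  Quotient (MulAction.orbitRel S.terminal T)

section Aux

variable {A : Type*}

local notation "P" => PresentedGroup (conjRels (trivialSystem A))

lemma conjRels_sq (t : A) :
    FreeGroup.of t * FreeGroup.of t ∈ conjRels (trivialSystem A) :=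
  Or.inl ⟨t, rfl⟩

lemma conjRels_comm (s t : A) :
    FreeGroup.of t * FreeGroup.of s * (FreeGroup.of t)⁻¹ * (FreeGroup.of s)⁻¹
      ∈ conjRels (trivialSystem A) :=
  Or.inr ⟨s, t, rfl⟩

lemma mk_rel_eq_one {r : FreeGroup A} (hr : r ∈ conjRels (trivialSystem A)) :
    (QuotientGroup.mk r : P) = 1 :=
  (QuotientGroup.eq_one_iff _).2 (Subgroup.subset_normalClosure hr)

lemma of_sq (t : A) : (PresentedGroup.of t : P) * PresentedGroup.of t = 1 := by
  have := mk_rel_eq_one (conjRels_sq t)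
  exact this

lemma of_commute (s t : A) :
    Commute (PresentedGroup.of s : P) (PresentedGroup.of t) := by
  have := mk_rel_eq_one (conjRels_comm t s)
  have h : (PresentedGroup.of s : P) * PresentedGroup.of t * (PresentedGroup.of s)⁻¹ *
      (PresentedGroup.of t)⁻¹ = 1 := by exact this
  rw [Commute, SemiconjBy, ← mul_inv_eq_one, mul_inv_rev]
  simpa [mul_assoc] using h

lemma P_comm (x y : P) : x * y = y * x := by
  have hx : x ∈ Subgroup.closure (Set.range (PresentedGroup.of : A → P)) := by
    rw [PresentedGroup.closure_range_of]; trivial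
  have hy : y ∈ Subgroup.closure (Set.range (PresentedGroup.of : A → P)) := by
    rw [PresentedGroup.closure_range_of]; trivial
  induction hx using Subgroup.closure_induction with
  | mem a ha =>
    induction hy using Subgroup.closure_induction with
    | mem b hb =>
      obtain ⟨s, rfl⟩ := ha; obtain ⟨t, rfl⟩ := hb
      exact of_commute s t
    | one => simp
    | mul b c _ _ hb hc => exact Commute.mul_right hb hc
    | inv b _ hb => exact (Commute.inv_right hb : Commute a b⁻¹)
  | one => simp
  | mul a b _ _ ha hb => exact Commute.mul_left ha hb
  | inv a _ ha => exact ((Commute.inv_left (ha : Commute a y)) : Commute a⁻¹ y)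

end Aux

section Aux2

variable {A : Type*}

local notation "P" => PresentedGroup (conjRels (trivialSystem A))

noncomputable def Pcomm : CommGroup P :=
  { (inferInstance : Group P) with mul_comm := P_comm }

attribute [local instance] Pcomm

lemma rels_lift (f : A → Multiplicative (A →₀ ZMod 2))
    (hf : f = fun t => Multiplicative.ofAdd (Finsupp.single t 1)) :
    ∀ r ∈ conjRels (trivialSystem A), FreeGroup.lift f r = 1 := by
  rintro r (⟨t, rfl⟩ | ⟨s, t, rfl⟩)
  · subst hf
    simp only [map_mul, FreeGroup.lift_apply_of, ← ofAdd_add, ← Finsupp.single_add]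
    norm_num
    decide
  · simp only [map_mul, map_inv, FreeGroup.lift_apply_of]
    show f t * f s * (f t)⁻¹ * (f s)⁻¹ = 1
    rw [mul_comm (f t) (f s)]
    group

noncomputable def phi : P →* Multiplicative (A →₀ ZMod 2) :=
  PresentedGroup.toGroup (rels_lift (fun t => Multiplicative.ofAdd (Finsupp.single t 1)) rfl)

lemma phi_of (t : A) : phi (PresentedGroup.of t) = Multiplicative.ofAdd (Finsupp.single t 1) :=
  PresentedGroup.toGroup.of _

noncomputable def psi0 : (A →₀ ZMod 2) →+ Additive P :=
  Finsupp.liftAddHom (fun t => ZMod.lift 2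
    ⟨zmultiplesHom _ (Additive.ofMul (PresentedGroup.of t)), by
      show (2 : ℤ) • Additive.ofMul (PresentedGroup.of t) = 0
      rw [two_zsmul, ← ofMul_mul, of_sq]
      rfl⟩)

lemma psi0_single (t : A) :
    psi0 (Finsupp.single t 1) = Additive.ofMul (PresentedGroup.of t : P) := by
  erw [psi0, Finsupp.liftAddHom_apply_single,
    show ((1 : ZMod 2)) = ((1 : ℤ) : ZMod 2) by decide, ZMod.lift_coe]

noncomputable def psi : Multiplicative (A →₀ ZMod 2) →* P :=
  AddMonoidHom.toMultiplicativeLeft psi0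

lemma psi_phi (x : P) : psi (phi x) = x := by
  have : (psi.comp phi : P →* P) = MonoidHom.id P := by
    ext t
    show psi (phi (PresentedGroup.of t)) = PresentedGroup.of t
    rw [phi_of]
    show Additive.toMul (psi0 (Finsupp.single t 1)) = _
    rw [psi0_single]
    rfl
  exact DFunLike.congr_fun this x

lemma phi_psi_single (a : A) (b : ZMod 2) :
    phi (psi (Multiplicative.ofAdd (Finsupp.single a b)))
      = Multiplicative.ofAdd (Finsupp.single a b) := by
  have hb : b = 0 ∨ b = 1 := by revert b; decide
  rcases hb with rfl | rfl
  · show phi (Additive.toMul (psi0 (Finsupp.single a 0))) = _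
    rw [Finsupp.single_zero, map_zero]
    exact map_one phi
  · show phi (Additive.toMul (psi0 (Finsupp.single a 1))) = _
    rw [psi0_single]
    exact phi_of a

lemma phi_psi (x : Multiplicative (A →₀ ZMod 2)) : phi (psi x) = x := by
  have key : ∀ f : A →₀ ZMod 2,
      phi (psi (Multiplicative.ofAdd f)) = Multiplicative.ofAdd f := by
    intro f
    induction f using Finsupp.induction with
    | zero =>
      show phi (Additive.toMul (psi0 (0 : A →₀ ZMod 2))) = _
      rw [map_zero]
      exact map_one phi
    | single_add a b g _ _ ih =>
      rw [ofAdd_add, map_mul, map_mul, ih, phi_psi_single]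
  exact key x

noncomputable def theIso : P ≃* Multiplicative (A →₀ ZMod 2) :=
  { toFun := phi, invFun := psi, left_inv := psi_phi, right_inv := phi_psi,
    map_mul' := map_mul phi }

end Aux2

/-- The initial reflection group of `T^ab` (with the trivial multiplication) is isomorphic
to the direct sum of copies of `ℤ/2` indexed by `T^ab`; in particular it is a proper
reflection group. -/
theorem initial_orbitSpace_reflectionGroup_iso
    {T : Type*} (S : SymmetricSystem T) :
    Nonempty ((PresentedGroup (conjRels (trivialSystem S.orbitSpace)))
        ≃* Multiplicative (S.orbitSpace →₀ ZMod 2)) ∧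
    Function.Injective (fun t : S.orbitSpace =>
      (PresentedGroup.of t : PresentedGroup (conjRels (trivialSystem S.orbitSpace)))) ∧
    (∀ t : S.orbitSpace,
      (PresentedGroup.of t : PresentedGroup (conjRels (trivialSystem S.orbitSpace))) ≠ 1) := by

  refine ⟨⟨theIso⟩, ?_, ?_⟩
  · intro s t h
    have h2 := congrArg phi h
    rw [phi_of, phi_of] at h2
    exact Finsupp.single_left_injective (by decide : (1 : ZMod 2) ≠ 0)
      (Multiplicative.ofAdd.injective h2)
  · intro t ht
    have h2 := congrArg phi ht
    rw [phi_of, map_one] at h2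
    exact (by decide : (1 : ZMod 2) ≠ 0)
      (Finsupp.single_eq_zero.mp (Multiplicative.ofAdd.injective h2))
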